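/- Let V be a finite type with |V| = n ≥ 1, E ⊆ V × V an edge relation, w : V × V → ℝ a weight function, and t ∈ V a fixed sink. Define the Bellman–Ford iterates d_k : V → ℝ ∪ {+∞} by d_0(t) = 0, d_0(u) = +∞ for u ≠ t, and d_{k+1}(u) = min(d_k(u), min_{(u,v) ∈ E} (w(u,v) + d_k(v))). If the graph contains no negative-cost cycle, then d_n = d_{n−1}; that is, the Bellman–Ford iteration stabilizes after at most n − 1 iterations. -/

import Mathlib

open scoped Classical

/-- Bellman–Ford iterates toward a sink `t`, valued in the extended reals:
`d 0 t = 0`, `d 0 u = +∞` for `u ≠ t`, and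
`d (k+1) u = min (d k u) (min over edges (u,v) of w(u,v) + d k v)`. -/
noncomputable def bellmanFord (V : Type*) (E : V → V → Prop)
    (w : V × V → ℝ) (t : V) : ℕ → V → EReal
  | 0, u => if u = t then 0 else ⊤
  | (k + 1), u =>
      min (bellmanFord V E w t k u)
        (⨅ (v : V) (_ : E u v), ((w (u, v) : EReal) + bellmanFord V E w t k v))

section BFAux
set_option linter.unusedSectionVars false
variable {V : Type*} [Fintype V] {E : V → V → Prop} {w : V × V → ℝ} {t : V}

lemma bf_succ (k : ℕ) (u : V) : bellmanFord V E w t (k+1) u =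
    min (bellmanFord V E w t k u)
      (⨅ (v : V) (_ : E u v), ((w (u, v) : EReal) + bellmanFord V E w t k v)) := by
  rw [bellmanFord]

lemma bf_antitone {j k : ℕ} (h : j ≤ k) (u : V) :
    bellmanFord V E w t k u ≤ bellmanFord V E w t j u := by
  induction k with
  | zero => simp_all
  | succ k ih =>
    rcases Nat.lt_or_ge j (k+1) with h' | h'
    · exact le_trans (by rw [bf_succ]; exact min_le_left _ _) (ih (Nat.lt_succ_iff.mp h'))
    · have : j = k+1 := le_antisymm h h'
      subst this; rfl

lemma bf_le_cost : ∀ (j : ℕ) (u : V) (v : ℕ → V), v 0 = u → v j = t →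
    (∀ i < j, E (v i) (v (i+1))) →
    bellmanFord V E w t j u ≤ ((∑ i ∈ Finset.range j, w (v i, v (i+1)) : ℝ) : EReal) := by
  intro j
  induction j with
  | zero =>
    intro u v h0 ht _
    have : u = t := h0 ▸ ht
    simp [bellmanFord, this]
  | succ j ih =>
    intro u v h0 ht hE
    have step : bellmanFord V E w t (j+1) u ≤
        (w (u, v 1) : EReal) + bellmanFord V E w t j (v 1) := by
      rw [bf_succ]
      refine le_trans (min_le_right _ _) ?_
      have hE0 : E u (v 1) := h0 ▸ hE 0 (Nat.succ_pos j)
      exact iInf₂_le (v 1) hE0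
    have tail : bellmanFord V E w t j (v 1) ≤
        ((∑ i ∈ Finset.range j, w (v (i+1), v (i+2)) : ℝ) : EReal) :=
      ih (v 1) (fun i => v (i+1)) rfl ht (fun i hi => hE (i+1) (by omega))
    calc bellmanFord V E w t (j+1) u
        ≤ (w (u, v 1) : EReal) + bellmanFord V E w t j (v 1) := step
      _ ≤ (w (u, v 1) : EReal) + ((∑ i ∈ Finset.range j, w (v (i+1), v (i+2)) : ℝ) : EReal) :=
          add_le_add_right tail _
      _ = ((∑ i ∈ Finset.range (j+1), w (v i, v (i+1)) : ℝ) : EReal) := by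
          rw [← EReal.coe_add]
          congr 1
          rw [Finset.sum_range_succ']
          rw [h0, add_comm]

lemma inf_attained (f : V → EReal) (u : V) :
    (⨅ (v : V) (_ : E u v), f v) = ⊤ ∨
    ∃ v0, E u v0 ∧ (⨅ (v : V) (_ : E u v), f v) = f v0 := by
  classical
  set s : Finset V := Finset.univ.filter (fun v => E u v) with hs
  have hiff : ∀ v, v ∈ s ↔ E u v := by intro v; simp [hs]
  have hinf : (⨅ (v : V) (_ : E u v), f v) = s.inf f := by
    rw [Finset.inf_eq_iInf]
    refine iInf_congr (fun v => ?_)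
    simp only [hiff v]
  rcases s.eq_empty_or_nonempty with he | hne
  · left; rw [hinf, he]; simp
  · right
    obtain ⟨v0, hv0, hmin⟩ := Finset.exists_mem_eq_inf s hne f
    exact ⟨v0, (hiff v0).mp hv0, by rw [hinf, hmin]⟩

lemma bf_exists_walk (k : ℕ) (u : V) :
    bellmanFord V E w t k u = ⊤ ∨ ∃ j ≤ k, ∃ v : ℕ → V, v 0 = u ∧ v j = t ∧
      (∀ i < j, E (v i) (v (i+1))) ∧
      bellmanFord V E w t k u = ((∑ i ∈ Finset.range j, w (v i, v (i+1)) : ℝ) : EReal) := by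
  induction k generalizing u with
  | zero =>
    by_cases h : u = t
    · right
      exact ⟨0, le_refl 0, fun _ => t, by simp [h], rfl, by omega, by simp [bellmanFord, h]⟩
    · left; simp [bellmanFord, h]
  | succ k ih =>
    rw [bf_succ]
    set A := bellmanFord V E w t k u with hA
    set B := ⨅ (v : V) (_ : E u v), ((w (u, v) : EReal) + bellmanFord V E w t k v) with hB
    rcases le_total A B with hAB | hAB
    · rw [min_eq_left hAB]
      rcases ih u with h | ⟨j, hj, v, h0, ht', hE', hcost⟩
      · left; exact h
      · right; exact ⟨j, by omega, v, h0, ht', hE', hcost⟩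
    · rw [min_eq_right hAB]
      rcases inf_attained (fun v => (w (u, v) : EReal) + bellmanFord V E w t k v) u with h | ⟨v0, hv0, heq⟩
      · left; exact h
      · rcases ih v0 with h | ⟨j, hj, v, h0, ht', hE', hcost⟩
        · left; rw [← hB] at heq; rw [heq, h]; simp
        · right
          refine ⟨j + 1, by omega, fun i => if i = 0 then u else v (i - 1), by simp, ?_, ?_, ?_⟩
          · simp [ht']
          · intro i hi
            rcases Nat.eq_zero_or_pos i with rfl | hipos
            · simpa [h0] using hv0
            · have h1 : ¬ (i = 0) := by omega
              have h2 : ¬ (i + 1 = 0) := by omega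
              simp only [h1, h2, if_false]
              have : i - 1 + 1 = i := by omega
              have he := hE' (i - 1) (by omega)
              rwa [this] at he
          · rw [← hB] at heq
            rw [heq, hcost]
            simp only []
            rw [Finset.sum_range_succ']
            have hterm : ∀ i ∈ Finset.range j,
                w ((if i + 1 = 0 then u else v (i + 1 - 1)), (if i + 1 + 1 = 0 then u else v (i + 1 + 1 - 1)))
                = w (v i, v (i + 1)) := by
              intro i _; simp
            rw [Finset.sum_congr rfl hterm]
            simp [h0, ← EReal.coe_add, add_comm]

theorem cycle_removal (v : ℕ → V) (n a b : ℕ) (hab : a < b) (hbn : b ≤ n) (hrep : v a = v b)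
    (hE : ∀ i < n, E (v i) (v (i+1))) :
    ∃ v' : ℕ → V, v' 0 = v 0 ∧ v' (n - (b - a)) = v n ∧
      (∀ i < n - (b - a), E (v' i) (v' (i+1))) ∧
      (∑ i ∈ Finset.range (n - (b - a)), w (v' i, v' (i+1)))
        + (∑ i ∈ Finset.Ico a b, w (v i, v (i+1)))
        = ∑ i ∈ Finset.range n, w (v i, v (i+1)) := by
  classical
  refine ⟨fun i => if i ≤ a then v i else v (i + (b - a)), by simp, ?_, ?_, ?_⟩
  · by_cases h : n - (b - a) ≤ a
    · have hb : b = n := by omega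
      have ha : n - (b - a) = a := by omega
      simp only [h, if_true]
      rw [ha, hrep, hb]
    · simp only [h, if_false]
      congr 1
      omega
  · intro i hi
    by_cases h1 : i + 1 ≤ a
    · have h0 : i ≤ a := by omega
      simp only [h0, h1, if_true]
      exact hE i (by omega)
    · by_cases h0 : i ≤ a
      · have hia : i = a := by omega
        subst hia
        simp only [h0, h1, if_true, if_false]
        rw [hrep]
        have e2 : i + 1 + (b - i) = b + 1 := by omega
        rw [e2]
        exact hE b (by omega)
      · simp only [h0, h1, if_false]
        have e2 : i + 1 + (b - a) = (i + (b - a)) + 1 := by omega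
        rw [e2]
        exact hE (i + (b - a)) (by omega)
  · have hsplit1 : ∑ i ∈ Finset.range n, w (v i, v (i+1))
        = ((∑ i ∈ Finset.range a, w (v i, v (i+1)))
          + (∑ i ∈ Finset.Ico a b, w (v i, v (i+1))))
          + (∑ i ∈ Finset.Ico b n, w (v i, v (i+1))) := by
      rw [Finset.sum_range_add_sum_Ico _ (le_of_lt hab),
        Finset.sum_range_add_sum_Ico _ hbn]
    have ham : a ≤ n - (b - a) := by omega
    have hsplit2 : ∑ i ∈ Finset.range (n - (b - a)),
          w ((if i ≤ a then v i else v (i + (b - a))), (if i + 1 ≤ a then v (i+1) else v (i + 1 + (b - a))))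
        = (∑ i ∈ Finset.range a, w (v i, v (i+1)))
          + (∑ i ∈ Finset.Ico b n, w (v i, v (i+1))) := by
      rw [← Finset.sum_range_add_sum_Ico _ ham]
      congr 1
      · refine Finset.sum_congr rfl (fun i hi => ?_)
        simp only [Finset.mem_range] at hi
        have h0 : i ≤ a := by omega
        have h1 : i + 1 ≤ a := by omega
        simp only [h0, h1, if_true]
      · have key : ∀ i ∈ Finset.Ico a (n - (b - a)),
            w ((if i ≤ a then v i else v (i + (b - a))), (if i + 1 ≤ a then v (i+1) else v (i + 1 + (b - a))))
            = w (v (i + (b - a)), v ((i + (b - a)) + 1)) := by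
          intro i hi
          simp only [Finset.mem_Ico] at hi
          have h1 : ¬ (i + 1 ≤ a) := by omega
          by_cases h0 : i ≤ a
          · have hia : i = a := by omega
            subst hia
            have e1 : i + (b - i) = b := by omega
            have e2 : i + 1 + (b - i) = b + 1 := by omega
            simp only [le_refl, if_true, h1, if_false, e1, e2, hrep]
          · have e2 : i + 1 + (b - a) = (i + (b - a)) + 1 := by omega
            simp only [h0, h1, if_false, e2]
        rw [Finset.sum_congr rfl key]
        rw [Finset.sum_Ico_eq_sum_range, Finset.sum_Ico_eq_sum_range]
        have hma : n - (b - a) - a = n - b := by omega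
        rw [hma]
        refine Finset.sum_congr rfl (fun i _ => ?_)
        have e1 : a + i + (b - a) = b + i := by omega
        rw [e1]
    rw [hsplit1, hsplit2]
    ring

end BFAux

/-- If the graph has no negative-cost cycle and `n = |V| ≥ 1`, then the
Bellman–Ford iteration stabilizes after at most `n - 1` iterations:
`d n = d (n-1)`. -/
theorem bellmanFord_stabilizes
    (V : Type*) [Fintype V] (E : V → V → Prop) (w : V × V → ℝ) (t : V)
    (n : ℕ) (hn : n = Fintype.card V) (hn1 : 1 ≤ n)
    (hnoneg : ∀ (k : ℕ) (v : ℕ → V), 1 ≤ k → v k = v 0 →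
      (∀ i < k, E (v i) (v (i + 1))) →
      0 ≤ ∑ i ∈ Finset.range k, w (v i, v (i + 1))) :
    bellmanFord V E w t n = bellmanFord V E w t (n - 1) := by
  funext u
  refine le_antisymm (bf_antitone (Nat.sub_le n 1) u) ?_
  rcases bf_exists_walk n u with h | ⟨j, hj, v, h0, ht', hE', hcost⟩
  · rw [h]; exact le_top
  · by_cases hj' : j ≤ n - 1
    · rw [hcost]
      exact le_trans (bf_antitone hj' u) (bf_le_cost j u v h0 ht' hE')
    · have hjn : j = n := by omega
      subst hjn
      -- pigeonhole: some vertex repeats among v 0, ..., v j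
      obtain ⟨x, y, hxy, hfeq⟩ :=
        Fintype.exists_ne_map_eq_of_card_lt (fun i : Fin (j+1) => v i)
          (by simp [← hn])
      obtain ⟨a, b, hab, hbn, hrep⟩ : ∃ a b : ℕ, a < b ∧ b ≤ j ∧ v a = v b := by
        rcases hxy.lt_or_gt with h | h
        · exact ⟨x, y, h, Nat.lt_succ_iff.mp y.isLt, hfeq⟩
        · exact ⟨y, x, h, Nat.lt_succ_iff.mp x.isLt, hfeq.symm⟩
      obtain ⟨v', h0', ht'', hE'', hsum⟩ := cycle_removal (E := E) (w := w) v j a b hab hbn hrep hE'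
      have hcyc : 0 ≤ ∑ i ∈ Finset.Ico a b, w (v i, v (i+1)) := by
        have := hnoneg (b - a) (fun i => v (a + i)) (by omega)
          (by simp only [add_zero]; rw [show a + (b - a) = b by omega]; exact hrep.symm)
          (fun i hi => by
            have := hE' (a + i) (by omega)
            simpa [Nat.add_assoc] using this)
        calc (0:ℝ) ≤ ∑ i ∈ Finset.range (b - a), w (v (a + i), v (a + i + 1)) := by
              simpa [Nat.add_assoc] using this
          _ = ∑ i ∈ Finset.Ico a b, w (v i, v (i+1)) := by
              rw [Finset.sum_Ico_eq_sum_range]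
      have hle : (∑ i ∈ Finset.range (j - (b - a)), w (v' i, v' (i+1)))
          ≤ ∑ i ∈ Finset.range j, w (v i, v (i+1)) := by linarith
      have hm : j - (b - a) ≤ j - 1 := by omega
      calc bellmanFord V E w t (j - 1) u
          ≤ bellmanFord V E w t (j - (b - a)) u := bf_antitone hm u
        _ ≤ ((∑ i ∈ Finset.range (j - (b - a)), w (v' i, v' (i+1)) : ℝ) : EReal) :=
            bf_le_cost _ u v' (h0 ▸ h0') (ht' ▸ ht'') hE''
        _ ≤ ((∑ i ∈ Finset.range j, w (v i, v (i+1)) : ℝ) : EReal) :=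
            EReal.coe_le_coe_iff.mpr hle
        _ = bellmanFord V E w t j u := hcost.symm
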